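/- For 7/2 ≤ a ≤ 17/2, let ρ₄(a) be the 6×6 matrix (1/(8a+2)) · [[3a+1,0,0,0,2a−2,0],[0,a,0,0,0,2a−2],[0,0,0,0,0,0],[0,0,0,0,0,0],[2a−2,0,0,0,a,0],[0,2a−2,0,0,0,3a+1]]. Then ρ₄(a) is a 2⊗3 state and it violates the inequality D ≥ N², i.e., D(ρ₄(a)) < N(ρ₄(a))². -/

import Mathlib

set_option maxHeartbeats 4000000


open Matrix BigOperators Polynomial
open scoped Kronecker ComplexOrder

noncomputable section

/-- Squared Hilbert–Schmidt norm `‖C‖² = Tr(CᴴC)`. -/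
def hsNormSq {d : Type*} [Fintype d] (C : Matrix d d ℂ) : ℝ :=
  (Matrix.trace (Cᴴ * C)).re

/-- The square root of a positive semidefinite matrix, as `Matrix.PosSemidef.sqrt` was
defined in the older Mathlib. -/
def psdSqrtOld {d : Type*} [Fintype d] [DecidableEq d] {A : Matrix d d ℂ}
    (hA : A.PosSemidef) : Matrix d d ℂ :=
  hA.1.eigenvectorUnitary.1 * diagonal ((↑) ∘ (√·) ∘ hA.1.eigenvalues) *
  (star hA.1.eigenvectorUnitary : Matrix d d ℂ)

/-- Trace norm `‖X‖₁ = Tr √(XᴴX)`. -/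
def traceNorm {d : Type*} [Fintype d] [DecidableEq d] (X : Matrix d d ℂ) : ℝ :=
  ((psdSqrtOld (Matrix.posSemidef_conjTranspose_mul_self X)).trace).re

/-- Partial transpose on the first factor: `ρ^Γ((i,k),(j,l)) = ρ((j,k),(i,l))`. -/
def ptranspose {m n : ℕ} (ρ : Matrix (Fin m × Fin n) (Fin m × Fin n) ℂ) :
    Matrix (Fin m × Fin n) (Fin m × Fin n) ℂ :=
  Matrix.of fun p q => ρ (q.1, p.2) (p.1, q.2)

/-- Negativity `N(ρ) = (‖ρ^Γ‖₁ - 1)/(m-1)`. -/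
def negativity {m n : ℕ} (ρ : Matrix (Fin m × Fin n) (Fin m × Fin n) ℂ) : ℝ :=
  (traceNorm (ptranspose ρ) - 1) / ((m : ℝ) - 1)

/-- `ψ` is an orthonormal basis of `ℂ^m` (an orthonormal family of `m` vectors). -/
def IsONB {m : ℕ} (ψ : Fin m → (Fin m → ℂ)) : Prop :=
  ∀ k l, (∑ i, star (ψ k i) * ψ l i) = if k = l then 1 else 0

/-- The rank-one projector `|v⟩⟨v|`. -/
def proj {m : ℕ} (v : Fin m → ℂ) : Matrix (Fin m) (Fin m) ℂ :=
  Matrix.vecMulVec v (fun j => star (v j))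

/-- The von Neumann measurement map
`Π^A(ρ) = ∑ k, (|ψ_k⟩⟨ψ_k| ⊗ I_n) ρ (|ψ_k⟩⟨ψ_k| ⊗ I_n)`. -/
def piA {m n : ℕ} (ψ : Fin m → (Fin m → ℂ))
    (ρ : Matrix (Fin m × Fin n) (Fin m × Fin n) ℂ) :
    Matrix (Fin m × Fin n) (Fin m × Fin n) ℂ :=
  ∑ k, (proj (ψ k) ⊗ₖ (1 : Matrix (Fin n) (Fin n) ℂ)) * ρ *
       (proj (ψ k) ⊗ₖ (1 : Matrix (Fin n) (Fin n) ℂ))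

/-- Geometric discord
`D(ρ) = (m/(m-1)) · inf over von Neumann measurements of ‖ρ - Π^A(ρ)‖²`. -/
def gd {m n : ℕ} (ρ : Matrix (Fin m × Fin n) (Fin m × Fin n) ℂ) : ℝ :=
  ((m : ℝ) / ((m : ℝ) - 1)) *
    ⨅ ψ : {ψ : Fin m → (Fin m → ℂ) // IsONB ψ}, hsNormSq (ρ - piA ψ.1 ρ)

/-- An `m ⊗ n` state: positive semidefinite with trace one. -/
def IsState {m n : ℕ} (ρ : Matrix (Fin m × Fin n) (Fin m × Fin n) ℂ) : Prop :=
  ρ.PosSemidef ∧ ρ.trace = 1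

/-- Reindex a `6 × 6` matrix by `Fin 2 × Fin 3` with the ordering
`(1,1),(1,2),(1,3),(2,1),(2,2),(2,3)`. -/
def ofM6 (M : Matrix (Fin 6) (Fin 6) ℂ) :
    Matrix (Fin 2 × Fin 3) (Fin 2 × Fin 3) ℂ :=
  Matrix.of fun p q =>
    M ⟨p.1.val * 3 + p.2.val, by have := p.1.isLt; have := p.2.isLt; omega⟩
      ⟨q.1.val * 3 + q.2.val, by have := q.1.isLt; have := q.2.isLt; omega⟩

/-- The family of states `ρ₁(a,b)`. -/
def rho1 (a b : ℝ) : Matrix (Fin 2 × Fin 3) (Fin 2 × Fin 3) ℂ :=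
  ofM6 ((1 / (2 * ((a : ℂ)^2 + (b : ℂ)^2))) •
    !![(a:ℂ)^2, 0, 0, 0, (a:ℂ)*(b:ℂ), 0;
       0, (b:ℂ)^2, 0, 0, 0, (a:ℂ)*(b:ℂ);
       0, 0, 0, 0, 0, 0;
       0, 0, 0, 0, 0, 0;
       (a:ℂ)*(b:ℂ), 0, 0, 0, (b:ℂ)^2, 0;
       0, (a:ℂ)*(b:ℂ), 0, 0, 0, (a:ℂ)^2])


/-! ### Auxiliary machinery -/

lemma psdSqrtOld_eq {d : Type*} [Fintype d] [DecidableEq d] {S B : Matrix d d ℂ}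
    (hS : S.PosSemidef) (hB : B.PosSemidef) (h : S ^ 2 = B) : S = psdSqrtOld hB := by
  have e1 : psdSqrtOld hB = cfc Real.sqrt B := by rw [hB.1.cfc_eq]; rfl
  have hsa : IsSelfAdjoint S := hS.1
  rw [e1, ← h, ← cfc_comp_pow (f := Real.sqrt) (n := 2) (a := S)]
  conv_lhs => rw [← cfc_id' ℝ S]
  refine cfc_congr fun x hx => ?_
  rw [hS.1.spectrum_real_eq_range_eigenvalues] at hx
  obtain ⟨i, rfl⟩ := hx
  exact (Real.sqrt_sq (hS.eigenvalues_nonneg i)).symm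

def idx : Fin 2 × Fin 3 → ℕ := fun p => p.1.val * 3 + p.2.val

def R0 (a : ℝ) : ℕ → ℕ → ℂ
  | 0, 0 => 3*(a:ℂ)+1
  | 1, 1 => (a:ℂ)
  | 4, 4 => (a:ℂ)
  | 5, 5 => 3*(a:ℂ)+1
  | 0, 4 => 2*(a:ℂ)-2
  | 4, 0 => 2*(a:ℂ)-2
  | 1, 5 => 2*(a:ℂ)-2
  | 5, 1 => 2*(a:ℂ)-2
  | _, _ => 0

def rhoF (a : ℝ) : Matrix (Fin 2 × Fin 3) (Fin 2 × Fin 3) ℂ :=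
  Matrix.of fun p q => (1 / (8 * (a:ℂ) + 2)) * R0 a (idx p) (idx q)

lemma bridge (a : ℝ) : (ofM6 ((1 / (8 * (a : ℂ) + 2)) •
      !![3*(a:ℂ)+1, 0, 0, 0, 2*(a:ℂ)-2, 0;
         0, (a:ℂ), 0, 0, 0, 2*(a:ℂ)-2;
         0, 0, 0, 0, 0, 0;
         0, 0, 0, 0, 0, 0;
         2*(a:ℂ)-2, 0, 0, 0, (a:ℂ), 0;
         0, 2*(a:ℂ)-2, 0, 0, 0, 3*(a:ℂ)+1])) = rhoF a := by
  ext p q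
  fin_cases p <;> fin_cases q <;> rfl

def X0 (a : ℝ) : ℕ → ℕ → ℂ
  | 0, 0 => 3*(a:ℂ)+1
  | 1, 1 => (a:ℂ)
  | 4, 4 => (a:ℂ)
  | 5, 5 => 3*(a:ℂ)+1
  | 1, 3 => 2*(a:ℂ)-2
  | 3, 1 => 2*(a:ℂ)-2
  | 2, 4 => 2*(a:ℂ)-2
  | 4, 2 => 2*(a:ℂ)-2
  | _, _ => 0

def XF (a : ℝ) : Matrix (Fin 2 × Fin 3) (Fin 2 × Fin 3) ℂ :=
  Matrix.of fun p q => (1 / (8 * (a:ℂ) + 2)) * X0 a (idx p) (idx q)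

lemma pt_rho (a : ℝ) : ptranspose (rhoF a) = XF a := by
  ext p q
  fin_cases p <;> fin_cases q <;> rfl

def b1 (a : ℝ) : ℝ := Real.sqrt (1/((8*a+2)*(3*a+1)))
def b2 (a : ℝ) : ℝ := Real.sqrt ((9*a-4-a^2)/((8*a+2)*(3*a+1)))

def B0 (a : ℝ) : ℕ → ℕ → ℝ
  | 0, 0 => b1 a * (3*a+1)
  | 0, 4 => b1 a * (2*a-2)
  | 1, 1 => b1 a * (2*a-2)
  | 1, 5 => b1 a * (3*a+1)
  | 2, 4 => b2 a
  | 3, 1 => b2 a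
  | _, _ => 0

def BF (a : ℝ) : Matrix (Fin 4) (Fin 2 × Fin 3) ℂ :=
  Matrix.of fun i q => ((B0 a i.val (idx q) : ℝ) : ℂ)

lemma rho_psd_decomp (a : ℝ) (ha0 : 7/2 ≤ a) (ha1 : a ≤ 17/2) :
    (BF a)ᴴ * BF a = rhoF a := by
  have hden : (0:ℝ) < (8*a+2)*(3*a+1) := by nlinarith
  have hnum : (0:ℝ) ≤ 9*a-4-a^2 := by
    nlinarith [mul_nonneg (by linarith : (0:ℝ) ≤ a - 7/2) (by linarith : (0:ℝ) ≤ 17/2 - a)]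
  have hb1 : (b1 a : ℂ) * (b1 a : ℂ) = 1/((8*(a:ℂ)+2)*(3*(a:ℂ)+1)) := by
    have : b1 a * b1 a = 1/((8*a+2)*(3*a+1)) :=
      Real.mul_self_sqrt (by positivity)
    calc (b1 a : ℂ) * (b1 a : ℂ) = ((b1 a * b1 a : ℝ) : ℂ) := by push_cast; ring
    _ = ((1/((8*a+2)*(3*a+1)) : ℝ) : ℂ) := by rw [this]
    _ = 1/((8*(a:ℂ)+2)*(3*(a:ℂ)+1)) := by push_cast; ring
  have hb2 : (b2 a : ℂ) * (b2 a : ℂ) = (9*(a:ℂ)-4-(a:ℂ)^2)/((8*(a:ℂ)+2)*(3*(a:ℂ)+1)) := by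
    have : b2 a * b2 a = (9*a-4-a^2)/((8*a+2)*(3*a+1)) :=
      Real.mul_self_sqrt (by positivity)
    calc (b2 a : ℂ) * (b2 a : ℂ) = ((b2 a * b2 a : ℝ) : ℂ) := by push_cast; ring
    _ = (((9*a-4-a^2)/((8*a+2)*(3*a+1)) : ℝ) : ℂ) := by rw [this]
    _ = (9*(a:ℂ)-4-(a:ℂ)^2)/((8*(a:ℂ)+2)*(3*(a:ℂ)+1)) := by push_cast; ring
  have h8 : (8*(a:ℂ)+2) ≠ 0 := by
    intro h
    have := congrArg Complex.re h
    simp at this; linarith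
  have h3 : (3*(a:ℂ)+1) ≠ 0 := by
    intro h
    have := congrArg Complex.re h
    simp at this; linarith
  have hb1sq : ((b1 a : ℝ) : ℂ)^2 = 1/((8*(a:ℂ)+2)*(3*(a:ℂ)+1)) := by rw [sq]; exact hb1
  have hb2sq : ((b2 a : ℝ) : ℂ)^2 = (9*(a:ℂ)-4-(a:ℂ)^2)/((8*(a:ℂ)+2)*(3*(a:ℂ)+1)) := by
    rw [sq]; exact hb2
  ext p q
  fin_cases p <;> fin_cases q <;>
    simp [BF, rhoF, B0, R0, idx, Matrix.mul_apply, Fin.sum_univ_four,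
      Matrix.conjTranspose_apply, Complex.conj_ofReal]
  all_goals try ring_nf
  all_goals try simp only [hb1sq, hb2sq]
  all_goals field_simp
  all_goals try ring

def sR (a : ℝ) : ℝ := Real.sqrt (17*a^2-32*a+16)

def S0 (a : ℝ) : ℕ → ℕ → ℝ
  | 0, 0 => (3*a+1)/(8*a+2)
  | 5, 5 => (3*a+1)/(8*a+2)
  | 1, 1 => (a^2+2*(2*a-2)^2)/((8*a+2)*sR a)
  | 4, 4 => (a^2+2*(2*a-2)^2)/((8*a+2)*sR a)
  | 2, 2 => (2*(2*a-2)^2)/((8*a+2)*sR a)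
  | 3, 3 => (2*(2*a-2)^2)/((8*a+2)*sR a)
  | 1, 3 => (a*(2*a-2))/((8*a+2)*sR a)
  | 3, 1 => (a*(2*a-2))/((8*a+2)*sR a)
  | 2, 4 => (a*(2*a-2))/((8*a+2)*sR a)
  | 4, 2 => (a*(2*a-2))/((8*a+2)*sR a)
  | _, _ => 0

def SF (a : ℝ) : Matrix (Fin 2 × Fin 3) (Fin 2 × Fin 3) ℂ :=
  Matrix.of fun p q => ((S0 a (idx p) (idx q) : ℝ) : ℂ)

lemma w_pos (a : ℝ) (ha0 : 7/2 ≤ a) : (0:ℝ) < 17*a^2-32*a+16 := by nlinarith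

lemma sR_pos (a : ℝ) (ha0 : 7/2 ≤ a) : 0 < sR a := Real.sqrt_pos.mpr (w_pos a ha0)

lemma h8C (a : ℝ) (ha0 : 7/2 ≤ a) : (8*(a:ℂ)+2) ≠ 0 := by
  intro h
  have := congrArg Complex.re h
  simp at this; linarith

lemma Ssq (a : ℝ) (ha0 : 7/2 ≤ a) : SF a * SF a = (XF a)ᴴ * XF a := by
  have hs2 : ((sR a : ℝ) : ℂ)^2 = 17*(a:ℂ)^2-32*(a:ℂ)+16 := by
    have : sR a * sR a = 17*a^2-32*a+16 := Real.mul_self_sqrt (w_pos a ha0).le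
    rw [sq]
    calc ((sR a : ℝ):ℂ) * ((sR a : ℝ):ℂ) = ((sR a * sR a : ℝ) : ℂ) := by push_cast; ring
    _ = _ := by rw [this]; push_cast; ring
  have hs4 : ((sR a : ℝ) : ℂ)^4 = (17*(a:ℂ)^2-32*(a:ℂ)+16)^2 := by
    rw [show (4:ℕ) = 2*2 from rfl, pow_mul, hs2]
  have hsne : ((sR a : ℝ) : ℂ) ≠ 0 := by
    simpa using (sR_pos a ha0).ne'
  have h8 := h8C a ha0
  ext p q
  fin_cases p <;> fin_cases q <;>
    simp [SF, XF, S0, X0, idx, Matrix.mul_apply, Fintype.sum_prod_type,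
      Fin.sum_univ_succ, Matrix.conjTranspose_apply, _root_.map_mul, map_div₀,
      _root_.map_add, map_sub, _root_.map_one, map_ofNat, Complex.conj_ofReal]
  all_goals field_simp
  all_goals try ring_nf
  all_goals try simp only [hs2, hs4]
  all_goals try ring

def g1 (a : ℝ) : ℝ := Real.sqrt (1/((8*a+2)*sR a))
def g3 (a : ℝ) : ℝ := Real.sqrt ((3*a+1)/(8*a+2))

def A0 (a : ℝ) : ℕ → ℕ → ℝ
  | 0, 0 => g3 a
  | 7, 5 => g3 a
  | 1, 1 => g1 a * a
  | 1, 3 => g1 a * (2*a-2)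
  | 2, 2 => g1 a * (2*a-2)
  | 2, 4 => g1 a * a
  | 3, 1 => g1 a * (2*a-2) * Real.sqrt 2
  | 4, 3 => g1 a * (2*a-2)
  | 5, 2 => g1 a * (2*a-2)
  | 6, 4 => g1 a * (2*a-2) * Real.sqrt 2
  | _, _ => 0

def AF (a : ℝ) : Matrix (Fin 8) (Fin 2 × Fin 3) ℂ :=
  Matrix.of fun i q => ((A0 a i.val (idx q) : ℝ) : ℂ)

lemma S_psd_decomp (a : ℝ) (ha0 : 7/2 ≤ a) : (AF a)ᴴ * AF a = SF a := by
  have hspos := sR_pos a ha0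
  have h8pos : (0:ℝ) < 8*a+2 := by linarith
  have h8c : (2 + (a:ℂ)*8) ≠ 0 := by
    rw [show (2 + (a:ℂ)*8) = 8*(a:ℂ)+2 by ring]; exact h8C a ha0
  have hg1sq : ((g1 a : ℝ) : ℂ)^2 = 1/(((8*(a:ℝ)+2)*sR a : ℝ) : ℂ) := by
    rw [sq]
    have : g1 a * g1 a = 1/((8*a+2)*sR a) := Real.mul_self_sqrt (by positivity)
    calc ((g1 a:ℝ):ℂ) * ((g1 a:ℝ):ℂ) = ((g1 a * g1 a : ℝ):ℂ) := by push_cast; ring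
    _ = _ := by rw [this]; push_cast; ring
  have hg3sq : ((g3 a : ℝ) : ℂ)^2 = ((3*(a:ℝ)+1)/(8*(a:ℝ)+2) : ℝ) := by
    rw [sq]
    have : g3 a * g3 a = (3*a+1)/(8*a+2) := Real.mul_self_sqrt (by positivity)
    calc ((g3 a:ℝ):ℂ) * ((g3 a:ℝ):ℂ) = ((g3 a * g3 a : ℝ):ℂ) := by push_cast; ring
    _ = _ := by rw [this]
  have h2sq : ((Real.sqrt 2 : ℝ) : ℂ)^2 = 2 := by
    rw [sq]
    have : Real.sqrt 2 * Real.sqrt 2 = 2 := Real.mul_self_sqrt (by norm_num)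
    calc ((Real.sqrt 2:ℝ):ℂ) * ((Real.sqrt 2:ℝ):ℂ) = ((Real.sqrt 2 * Real.sqrt 2 : ℝ):ℂ) := by
          push_cast; ring
    _ = 2 := by rw [this]; norm_num
  have hsne : (((8*(a:ℝ)+2)*sR a : ℝ) : ℂ) ≠ 0 := by
    simp only [ne_eq, Complex.ofReal_eq_zero]
    positivity
  ext p q
  fin_cases p <;> fin_cases q <;>
    simp [AF, SF, A0, S0, idx, Matrix.mul_apply, Fin.sum_univ_succ,
      Matrix.conjTranspose_apply, Complex.conj_ofReal]
  all_goals try ring_nf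
  all_goals try simp only [hg1sq, hg3sq, h2sq, mul_pow]
  all_goals try field_simp
  all_goals try (push_cast; ring)
  all_goals linear_combination (1 + (a:ℂ)*3) * mul_inv_cancel₀ h8c

lemma trace_rhoF (a : ℝ) (ha0 : 7/2 ≤ a) : (rhoF a).trace = 1 := by
  have h8 : (8*(a:ℂ)+2) ≠ 0 := h8C a ha0
  simp [Matrix.trace, rhoF, R0, idx, Fintype.sum_prod_type, Fin.sum_univ_succ]
  field_simp
  ring

lemma trace_SF (a : ℝ) (ha0 : 7/2 ≤ a) :
    (SF a).trace = (((6*a+2+2*sR a)/(8*a+2) : ℝ) : ℂ) := by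
  have hs2 : sR a * sR a = 17*a^2-32*a+16 := Real.mul_self_sqrt (w_pos a ha0).le
  have hsne : sR a ≠ 0 := (sR_pos a ha0).ne'
  have h8 : (8*a+2) ≠ 0 := by positivity
  simp [Matrix.trace, SF, S0, idx, Fintype.sum_prod_type, Fin.sum_univ_succ]
  have hreal : (3*a+1)/(8*a+2) +
        ((a^2+2*(2*a-2)^2)/((8*a+2)*sR a) + 2*(2*a-2)^2/((8*a+2)*sR a)) +
      (2*(2*a-2)^2/((8*a+2)*sR a) +
        ((a^2+2*(2*a-2)^2)/((8*a+2)*sR a) + (3*a+1)/(8*a+2))) =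
    (6*a+2+2*sR a)/(8*a+2) := by
    field_simp
    linear_combination (-2) * hs2
  have hC := congrArg (fun x : ℝ => (x : ℂ)) hreal
  push_cast at hC ⊢
  linear_combination hC

def psi0 : Fin 2 → Fin 2 → ℂ := fun k i => if i = k then 1 else 0

lemma psi0_onb : IsONB psi0 := by
  intro k l
  fin_cases k <;> fin_cases l <;> simp [psi0, Fin.sum_univ_succ]

lemma piA_std {n : ℕ} (ρ : Matrix (Fin 2 × Fin n) (Fin 2 × Fin n) ℂ) :
    piA psi0 ρ = Matrix.of fun p q => if p.1 = q.1 then ρ p q else 0 := by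
  ext p q
  simp only [piA, Matrix.sum_apply, Matrix.mul_apply, Matrix.kroneckerMap_apply,
    proj, Matrix.vecMulVec_apply, psi0, Matrix.one_apply, Matrix.of_apply]
  simp only [apply_ite (star : ℂ → ℂ), star_one, star_zero, ite_mul, mul_ite, one_mul, mul_one,
    zero_mul, mul_zero, Finset.sum_ite_irrel, Finset.sum_const_zero, Fintype.sum_prod_type]
  simp only [Finset.sum_ite_eq, Finset.sum_ite_eq', Finset.mem_univ, if_true,
    Finset.sum_ite_irrel, Finset.sum_const_zero, Fin.sum_univ_two]
  by_cases h : p.1 = q.1 <;> simp [h]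
  rw [← h]

lemma hsNormSq_nonneg {d : Type*} [Fintype d] (C : Matrix d d ℂ) : 0 ≤ hsNormSq C := by
  unfold hsNormSq Matrix.trace
  rw [Complex.re_sum]
  refine Finset.sum_nonneg fun i _ => ?_
  rw [Matrix.diag_apply, Matrix.mul_apply, Complex.re_sum]
  refine Finset.sum_nonneg fun j _ => ?_
  rw [Matrix.conjTranspose_apply]
  have : (star (C j i)) * C j i = ((Complex.normSq (C j i) : ℝ) : ℂ) := by
    rw [mul_comm]
    exact Complex.mul_conj _
  rw [this, Complex.ofReal_re]
  exact Complex.normSq_nonneg _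

lemma hs_delta (a : ℝ) (ha0 : 7/2 ≤ a) :
    hsNormSq (rhoF a - piA psi0 (rhoF a)) = 4*((2*a-2)/(8*a+2))^2 := by
  rw [piA_std]
  have h8 : (8*a+2) ≠ 0 := by positivity
  unfold hsNormSq
  simp [Matrix.trace, Matrix.mul_apply, Matrix.conjTranspose_apply,
    Fintype.sum_prod_type, Fin.sum_univ_succ, rhoF, R0, idx, Matrix.sub_apply]
  have hn : Complex.normSq (8*(a:ℂ)+2) = (8*a+2)^2 := by
    rw [show (8*(a:ℂ)+2) = ((8*a+2:ℝ):ℂ) by push_cast; ring, Complex.normSq_ofReal, sq]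
  rw [hn]
  field_simp
  ring

theorem stmt16 (a : ℝ) (ha0 : 7/2 ≤ a) (ha1 : a ≤ 17/2)
    (ρ : Matrix (Fin 2 × Fin 3) (Fin 2 × Fin 3) ℂ)
    (hρ : ρ = ofM6 ((1 / (8 * (a : ℂ) + 2)) •
      !![3*(a:ℂ)+1, 0, 0, 0, 2*(a:ℂ)-2, 0;
         0, (a:ℂ), 0, 0, 0, 2*(a:ℂ)-2;
         0, 0, 0, 0, 0, 0;
         0, 0, 0, 0, 0, 0;
         2*(a:ℂ)-2, 0, 0, 0, (a:ℂ), 0;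
         0, 2*(a:ℂ)-2, 0, 0, 0, 3*(a:ℂ)+1])) :
    IsState ρ ∧ gd ρ < negativity ρ ^ 2 := by
  have ha0' : (7:ℝ)/2 ≤ a := ha0
  have hbridge : ρ = rhoF a := hρ.trans (bridge a)
  have hs2 : sR a * sR a = 17*a^2-32*a+16 := Real.mul_self_sqrt (w_pos a ha0').le
  have hspos := sR_pos a ha0'
  have h8pos : (0:ℝ) < 8*a+2 := by linarith
  constructor
  · constructor
    · rw [hbridge, ← rho_psd_decomp a ha0 ha1]
      exact Matrix.posSemidef_conjTranspose_mul_self _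
    · rw [hbridge]
      exact trace_rhoF a ha0'
  · -- negativity value
    have hXpt : ptranspose ρ = XF a := by rw [hbridge]; exact pt_rho a
    have hSpsd : (SF a).PosSemidef := by
      rw [← S_psd_decomp a ha0']
      exact Matrix.posSemidef_conjTranspose_mul_self _
    have hsqrt : SF a = psdSqrtOld (Matrix.posSemidef_conjTranspose_mul_self (XF a)) :=
      psdSqrtOld_eq hSpsd _ (by rw [pow_two]; exact Ssq a ha0')
    have hTN : traceNorm (ptranspose ρ) = (6*a+2+2*sR a)/(8*a+2) := by
      rw [hXpt]
      unfold traceNorm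
      rw [← hsqrt, trace_SF a ha0', Complex.ofReal_re]
    have hneg : negativity ρ = (2*sR a - 2*a)/(8*a+2) := by
      unfold negativity
      rw [hTN]
      norm_num
      field_simp
      ring
    -- gd bound
    have hgd : gd ρ ≤ 2 * (4*((2*a-2)/(8*a+2))^2) := by
      rw [hbridge]
      unfold gd
      have hble : BddBelow (Set.range fun ψ : {ψ : Fin 2 → (Fin 2 → ℂ) // IsONB ψ} =>
          hsNormSq (rhoF a - piA ψ.1 (rhoF a))) := by
        refine ⟨0, ?_⟩
        rintro y ⟨ψ, rfl⟩
        exact hsNormSq_nonneg _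
      have hinf : (⨅ ψ : {ψ : Fin 2 → (Fin 2 → ℂ) // IsONB ψ},
          hsNormSq (rhoF a - piA ψ.1 (rhoF a))) ≤ 4*((2*a-2)/(8*a+2))^2 := by
        have h := ciInf_le hble (⟨psi0, psi0_onb⟩ : {ψ : Fin 2 → (Fin 2 → ℂ) // IsONB ψ})
        rwa [hs_delta a ha0'] at h
      have h2 : ((2:ℕ):ℝ)/(((2:ℕ):ℝ)-1) = 2 := by norm_num
      rw [h2]
      linarith
    -- final numeric inequality
    have hsq2 : Real.sqrt 2 ^ 2 = 2 := Real.sq_sqrt (by norm_num)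
    have hsq2nn : (0:ℝ) ≤ Real.sqrt 2 := Real.sqrt_nonneg 2
    have hr2 : Real.sqrt 2 < 1.42 := by nlinarith [hsq2, hsq2nn]
    have hta : Real.sqrt 2 * a < 2*a-2 := by nlinarith [hr2, hsq2nn]
    have hkey : (a + Real.sqrt 2*(2*a-2))^2 < sR a * sR a := by
      rw [hs2]
      nlinarith [hsq2, hta, hsq2nn]
    have h1 : Real.sqrt 2 * (2*a-2) < sR a - a := by
      nlinarith [hkey, hspos, hsq2nn]
    have h1sq := mul_self_lt_mul_self
      (mul_nonneg hsq2nn (by linarith : (0:ℝ) ≤ 2*a-2)) h1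
    have h2t : Real.sqrt 2*(2*a-2)*(Real.sqrt 2*(2*a-2)) = 2*((2*a-2)*(2*a-2)) := by
      rw [show Real.sqrt 2*(2*a-2)*(Real.sqrt 2*(2*a-2))
          = Real.sqrt 2^2*((2*a-2)*(2*a-2)) by ring, hsq2]
    have hfin : 2*(4*((2*a-2)/(8*a+2))^2) < ((2*sR a-2*a)/(8*a+2))^2 := by
      have hd : (0:ℝ) < (8*a+2)^2 := by positivity
      have hnum : 8*(2*a-2)^2 < (2*sR a-2*a)^2 := by nlinarith [h1sq, h2t]
      calc 2*(4*((2*a-2)/(8*a+2))^2) = (8*(2*a-2)^2)/(8*a+2)^2 := by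
            field_simp
            ring
      _ < ((2*sR a-2*a)^2)/(8*a+2)^2 :=
            (div_lt_div_iff₀ hd hd).mpr (by nlinarith [mul_lt_mul_of_pos_right hnum hd])
      _ = ((2*sR a-2*a)/(8*a+2))^2 := by rw [div_pow]
    calc gd ρ ≤ 2*(4*((2*a-2)/(8*a+2))^2) := hgd
    _ < ((2*sR a-2*a)/(8*a+2))^2 := hfin
    _ = negativity ρ ^ 2 := by rw [hneg]

end
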